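/- Let (g,σ,B) be a symmetric triple with eigenspace decomposition g = h ⊕ m. Then the set {X ∈ m : ⁅h,X⁆ = 0 for all h ∈ h} equals the center z(g) of g, and z(g) = m ∩ ⁅h,m⁆^⊥, where ⊥ denotes the B-orthogonal complement. In particular z(g) is contained in m. -/

import Mathlib

/-- For a symmetric triple `(g, σ, B)` with eigenspace decomposition
`g = h ⊕ m`, the set `{X ∈ m | ⁅h, X⁆ = 0}` equals the center `z(g)`, and
`z(g) = m ∩ ⁅h,m⁆^⊥`. In particular `z(g) ⊆ m`. -/
theorem center_of_symmetric_triple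
    (L : Type*) [LieRing L] [LieAlgebra ℝ L] [FiniteDimensional ℝ L]
    (σ : L →ₗ⁅ℝ⁆ L) (hσ : ∀ x, σ (σ x) = x)
    (H M : Submodule ℝ L)
    (hH : ∀ x, x ∈ H ↔ σ x = x)
    (hM : ∀ x, x ∈ M ↔ σ x = -x)
    (hcompl : IsCompl H M)
    (hHspan : H = Submodule.span ℝ {z : L | ∃ x ∈ M, ∃ y ∈ M, ⁅x, y⁆ = z})
    (B : LinearMap.BilinForm ℝ L)
    (hBnd : B.Nondegenerate)
    (hBsymm : ∀ x y : L, B x y = B y x)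
    (hBσ : ∀ x y : L, B (σ x) (σ y) = B x y)
    (hBad : ∀ x y z : L, B ⁅x, y⁆ z = B x ⁅y, z⁆) :
    (∀ X : L, (X ∈ M ∧ ∀ h ∈ H, ⁅h, X⁆ = 0) ↔ X ∈ LieAlgebra.center ℝ L) ∧
    (LieAlgebra.center ℝ L).toSubmodule =
      M ⊓ B.orthogonal (Submodule.span ℝ {z : L | ∃ x ∈ H, ∃ y ∈ M, ⁅x, y⁆ = z}) ∧
    (LieAlgebra.center ℝ L).toSubmodule ≤ M := by
  -- B vanishes on H × M
  have keyHM : ∀ h ∈ H, ∀ m ∈ M, B h m = 0 := by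
    intro h hh m hm
    have h1 := hBσ h m
    rw [(hH h).mp hh, (hM m).mp hm, map_neg] at h1
    linarith
  have keyMH : ∀ m ∈ M, ∀ h ∈ H, B m h = 0 := fun m hm h hh => by
    rw [hBsymm]; exact keyHM h hh m hm
  -- decomposition
  have hdec : ∀ x : L, ∃ h ∈ H, ∃ m ∈ M, h + m = x :=
    fun x => by
      obtain ⟨a, b, ha, hb, e⟩ := Submodule.codisjoint_iff_exists_add_eq.mp hcompl.codisjoint x
      exact ⟨a, ha, b, hb, e⟩
  -- bracket eigenspace rules
  have brMM : ∀ x ∈ M, ∀ y ∈ M, ⁅x, y⁆ ∈ H := by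
    intro x hx y hy
    rw [hH]
    have : σ ⁅x, y⁆ = ⁅σ x, σ y⁆ := σ.map_lie x y
    rw [this, (hM x).mp hx, (hM y).mp hy, lie_neg, neg_lie, neg_neg]
  have brHM : ∀ x ∈ H, ∀ y ∈ M, ⁅x, y⁆ ∈ M := by
    intro x hx y hy
    rw [hM]
    have : σ ⁅x, y⁆ = ⁅σ x, σ y⁆ := σ.map_lie x y
    rw [this, (hH x).mp hx, (hM y).mp hy, lie_neg]
  have hmemc : ∀ x : L, x ∈ LieAlgebra.center ℝ L ↔ ∀ y : L, ⁅y, x⁆ = 0 :=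
    fun x => LieModule.mem_maxTrivSubmodule ℝ L L x
  -- part 1
  have part1 : ∀ X : L, (X ∈ M ∧ ∀ h ∈ H, ⁅h, X⁆ = 0) ↔ X ∈ LieAlgebra.center ℝ L := by
    intro X
    constructor
    · rintro ⟨hXM, hXc⟩
      rw [hmemc]
      intro y
      obtain ⟨h, hh, m, hm, rfl⟩ := hdec y
      rw [add_lie, hXc h hh, zero_add]
      -- show ⁅m, X⁆ = 0
      have hbr : ⁅m, X⁆ ∈ H := brMM m hm X hXM
      apply hBnd.1
      intro w
      obtain ⟨h', hh', m', hm', rfl⟩ := hdec w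
      rw [map_add]
      have e1 : B ⁅m, X⁆ h' = 0 := by
        rw [hBad, ← lie_skew, hXc h' hh', neg_zero, map_zero]
      have e2 : B ⁅m, X⁆ m' = 0 := keyHM _ hbr m' hm'
      rw [e1, e2, add_zero]
    · intro hX
      rw [hmemc] at hX
      refine ⟨?_, fun h _ => hX h⟩
      -- X ∈ M: show X + σ X = 0
      have hz : X + σ X = 0 := by
        set z := X + σ X with hzdef
        have hzH : z ∈ H := by
          rw [hH, hzdef, map_add, hσ, add_comm]
        have hzc : ∀ y : L, ⁅z, y⁆ = 0 := by
          intro y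
          have h1 : ⁅X, y⁆ = 0 := by rw [← lie_skew, hX y, neg_zero]
          have h2 : ⁅σ X, y⁆ = 0 := by
            have : ⁅σ X, y⁆ = σ ⁅X, σ y⁆ := by
              rw [σ.map_lie, hσ]
            rw [this, ← lie_skew, hX (σ y), neg_zero, map_zero]
          rw [hzdef, add_lie, h1, h2, add_zero]
        apply hBnd.1
        intro w
        obtain ⟨h', hh', m', hm', rfl⟩ := hdec w
        rw [map_add]
        have e2 : B z m' = 0 := keyHM z hzH m' hm'
        have e1 : B z h' = 0 := by
          have hsub : h' ∈ Submodule.span ℝ {w : L | ∃ x ∈ M, ∃ y ∈ M, ⁅x, y⁆ = w} := by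
            rw [← hHspan]; exact hh'
          have hle : Submodule.span ℝ {w : L | ∃ x ∈ M, ∃ y ∈ M, ⁅x, y⁆ = w} ≤
              LinearMap.ker (B z) := by
            rw [Submodule.span_le]
            rintro w ⟨x, hx, y, hy, rfl⟩
            simp only [SetLike.mem_coe, LinearMap.mem_ker]
            rw [← hBad, hzc x, map_zero, LinearMap.zero_apply]
          exact hle hsub
        rw [e1, e2, add_zero]
      rw [hM]
      exact eq_neg_of_add_eq_zero_right (add_comm X (σ X) ▸ hz)
  have part3 : (LieAlgebra.center ℝ L).toSubmodule ≤ M := by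
    intro x hx
    rw [LieSubmodule.mem_toSubmodule] at hx
    exact ((part1 x).mpr hx).1
  refine ⟨part1, ?_, part3⟩
  ext x
  rw [LieSubmodule.mem_toSubmodule, Submodule.mem_inf, ← part1 x]
  constructor
  · rintro ⟨hxM, hxc⟩
    have hxall : ∀ y : L, ⁅y, x⁆ = 0 := (hmemc x).mp ((part1 x).mp ⟨hxM, hxc⟩)
    refine ⟨hxM, ?_⟩
    intro n hn
    have hle : Submodule.span ℝ {z : L | ∃ a ∈ H, ∃ b ∈ M, ⁅a, b⁆ = z} ≤
        LinearMap.ker (B.flip x) := by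
      rw [Submodule.span_le]
      rintro w ⟨a, ha, b, hb, rfl⟩
      simp only [SetLike.mem_coe, LinearMap.mem_ker]
      show B ⁅a, b⁆ x = 0
      rw [hBad, hxall b, map_zero]
    have h0 := hle hn
    rw [LinearMap.mem_ker] at h0
    exact h0
  · rintro ⟨hxM, hxo⟩
    refine ⟨hxM, ?_⟩
    intro h hh
    have horth : ∀ a ∈ H, ∀ b ∈ M, B ⁅a, b⁆ x = 0 := by
      intro a ha b hb
      exact hxo ⁅a, b⁆ (Submodule.subset_span ⟨a, ha, b, hb, rfl⟩)
    have hbr : ⁅h, x⁆ ∈ M := brHM h hh x hxM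
    apply hBnd.1
    intro w
    obtain ⟨h', hh', m', hm', rfl⟩ := hdec w
    rw [map_add]
    have e1 : B ⁅h, x⁆ h' = 0 := keyMH _ hbr h' hh'
    have e2 : B ⁅h, x⁆ m' = 0 := by
      rw [hBsymm, ← hBad, ← lie_skew, map_neg, LinearMap.neg_apply,
        horth h hh m' hm', neg_zero]
    rw [e1, e2, add_zero]
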